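/- Let n ≥ 3 be odd, B > 0, and let R = {x_1, …, x_n} be a multiset of real numbers with x_i ∈ [0, B] for all i. Let x_(1) ≤ ⋯ ≤ x_(n) denote the sorted values and m = (n+1)/2, so that median(R) = x_(m). Then the retain sensitivity of the median under adding one point from [0, B], namely max over x ∈ [0, B] of |median(R ∪ {x}) − median(R)|, equals (1/2)·max{ x_(m+1) − x_(m), x_(m) − x_(m−1) }. -/

import Mathlib

open List

/-- The median of a finite multiset of reals: the middle sorted value for odd size,
and the average of the two middle sorted values for even size. -/
noncomputable def mmedian (s : Multiset ℝ) : ℝ :=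
  if s.card % 2 = 1 then (s.sort (· ≤ ·)).getD ((s.card - 1) / 2) 0
  else ((s.sort (· ≤ ·)).getD (s.card / 2 - 1) 0 + (s.sort (· ≤ ·)).getD (s.card / 2) 0) / 2

/-- For an odd-size multiset `R ⊆ [0,B]` with sorted values `x_(1) ≤ ⋯ ≤ x_(n)` and
`m = (n+1)/2`, the retain sensitivity of the median under adding one point from `[0,B]`
equals `(1/2)·max{x_(m+1) − x_(m), x_(m) − x_(m−1)}`.
(Here 1-indexed `x_(i)` is the 0-indexed entry `i − 1` of the sorted list, so
`x_(m) = sorted[(n−1)/2]`, `x_(m+1) = sorted[(n+1)/2]`, `x_(m−1) = sorted[(n−1)/2 − 1]`.) -/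


lemma sorted_getD_mono {l : List ℝ} (hs : l.Pairwise (· ≤ ·)) {i j : ℕ}
    (hij : i ≤ j) (hj : j < l.length) : l.getD i 0 ≤ l.getD j 0 := by
  rcases eq_or_lt_of_le hij with rfl | h
  · exact le_refl _
  · rw [List.getD_eq_getElem _ _ (lt_of_le_of_lt hij hj), List.getD_eq_getElem _ _ hj]
    exact List.pairwise_iff_getElem.mp hs i j _ hj h

lemma getD_oi (x : ℝ) (l : List ℝ) (k p : ℕ)
    (hp : p = (l.takeWhile (fun b => ¬ x ≤ b)).length) :
    (List.orderedInsert (· ≤ ·) x l).getD k 0 =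
      if k < p then l.getD k 0 else if k = p then x else l.getD (k-1) 0 := by
  rw [List.orderedInsert_eq_take_drop]
  set t := l.takeWhile (fun b => ¬ x ≤ b) with ht
  set d := l.dropWhile (fun b => ¬ x ≤ b) with hd
  have hl : t ++ d = l := List.takeWhile_append_dropWhile
  rw [← hl]
  clear_value t d
  subst hp
  split_ifs with h1 h2
  · rw [List.getD_append _ _ _ _ (by omega), List.getD_append _ _ _ _ (by omega)]
  · subst h2
    rw [List.getD_append_right _ _ _ _ (le_refl _), Nat.sub_self, List.getD_cons_zero]
  · rw [List.getD_append_right _ _ _ _ (by omega), List.getD_append_right _ _ _ _ (by omega)]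
    have : k - t.length = (k - 1 - t.length) + 1 := by omega
    rw [this, List.getD_cons_succ]

lemma lt_of_lt_p (x : ℝ) (l : List ℝ) (k p : ℕ)
    (hp : p = (l.takeWhile (fun b => ¬ x ≤ b)).length) (hk : k < p) :
    l.getD k 0 < x := by
  subst hp
  have h1 : (l.takeWhile (fun b => ¬ x ≤ b)).getD k 0 = l.getD k 0 := by
    rw [List.getD_eq_getElem _ _ hk,
      List.getD_eq_getElem _ _ (lt_of_lt_of_le hk (List.takeWhile_prefix _).length_le),
      (List.takeWhile_prefix _).getElem hk]
  have hmem : l.getD k 0 ∈ l.takeWhile (fun b => ¬ x ≤ b) := by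
    rw [← h1, List.getD_eq_getElem _ _ hk]; exact List.getElem_mem _
  have h2 := List.mem_takeWhile_imp hmem
  have h3 : ¬ x ≤ l.getD k 0 := of_decide_eq_true h2
  linarith [not_le.mp h3]

lemma le_of_ge_p (x : ℝ) (l : List ℝ) (hs : l.Pairwise (· ≤ ·)) (k p : ℕ)
    (hp : p = (l.takeWhile (fun b => ¬ x ≤ b)).length) (hk : p ≤ k) (hkl : k < l.length) :
    x ≤ l.getD k 0 := by
  have hl : l.takeWhile (fun b => ¬ x ≤ b) ++ l.dropWhile (fun b => ¬ x ≤ b) = l :=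
    List.takeWhile_append_dropWhile
  have hlen : p + (l.dropWhile (fun b => ¬ x ≤ b)).length = l.length := by
    rw [hp, ← List.length_append, hl]
  have hne : l.dropWhile (fun b => ¬ x ≤ b) ≠ [] := by
    intro h
    rw [h, List.length_nil] at hlen
    omega
  rcases hd : l.dropWhile (fun b => ¬ x ≤ b) with _ | ⟨a, d'⟩
  · exact absurd hd hne
  have hhead := List.head_dropWhile_not (fun b => ¬ x ≤ b) hne
  simp only [hd, List.head_cons] at hhead
  have hxa : x ≤ a := not_not.mp (of_decide_eq_false hhead)
  have hpd : l.getD p 0 = a := by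
    rw [← hl, List.getD_append_right _ _ _ _ (by rw [← hp]), ← hp, Nat.sub_self, hd,
      List.getD_cons_zero]
  have := sorted_getD_mono hs hk hkl
  rw [hpd] at this
  linarith

lemma p_le_length (x : ℝ) (l : List ℝ) (p : ℕ)
    (hp : p = (l.takeWhile (fun b => ¬ x ≤ b)).length) : p ≤ l.length := by
  rw [hp]; exact (List.takeWhile_prefix _).length_le


lemma val_ub (l : List ℝ) (hs : l.Pairwise (· ≤ ·)) (m : ℕ) (hm : 1 ≤ m)
    (hlen : l.length = 2*m+1) (x : ℝ) :
    |((List.orderedInsert (· ≤ ·) x l).getD m 0 +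
        (List.orderedInsert (· ≤ ·) x l).getD (m+1) 0)/2 - l.getD m 0| ≤
      (1/2) * max (l.getD (m+1) 0 - l.getD m 0) (l.getD m 0 - l.getD (m-1) 0) := by
  obtain ⟨p, hp⟩ : ∃ p, p = (l.takeWhile (fun b => ¬ x ≤ b)).length := ⟨_, rfl⟩
  have hple := p_le_length x l p hp
  have e1 := getD_oi x l m p hp
  have e2 := getD_oi x l (m+1) p hp
  simp only [Nat.add_sub_cancel] at e2
  have g1 : l.getD m 0 ≤ l.getD (m+1) 0 := sorted_getD_mono hs (by omega) (by omega)
  have g2 : l.getD (m-1) 0 ≤ l.getD m 0 := sorted_getD_mono hs (by omega) (by omega)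
  have hmax1 : l.getD (m+1) 0 - l.getD m 0 ≤
      max (l.getD (m+1) 0 - l.getD m 0) (l.getD m 0 - l.getD (m-1) 0) := le_max_left _ _
  have hmax2 : l.getD m 0 - l.getD (m-1) 0 ≤
      max (l.getD (m+1) 0 - l.getD m 0) (l.getD m 0 - l.getD (m-1) 0) := le_max_right _ _
  rcases lt_or_ge p m with h | h
  · rw [if_neg (by omega), if_neg (by omega)] at e1
    rw [if_neg (by omega), if_neg (by omega)] at e2
    rw [e1, e2, abs_le]
    constructor <;> linarith
  rcases eq_or_lt_of_le h with heq | h'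
  · -- p = m
    rw [if_neg (by omega), if_pos heq] at e1
    rw [if_neg (by omega), if_neg (by omega)] at e2
    have hx1 : l.getD (m-1) 0 < x := lt_of_lt_p x l (m-1) p hp (by omega)
    have hx2 : x ≤ l.getD m 0 := le_of_ge_p x l hs m p hp (by omega) (by omega)
    rw [e1, e2, abs_le]
    constructor <;> linarith
  rcases eq_or_lt_of_le (show m+1 ≤ p by omega) with h2 | h2
  · -- p = m+1
    rw [if_pos (by omega)] at e1
    rw [if_neg (by omega), if_pos h2] at e2
    have hx1 : l.getD m 0 < x := lt_of_lt_p x l m p hp (by omega)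
    have hx2 : x ≤ l.getD (m+1) 0 := le_of_ge_p x l hs (m+1) p hp (by omega) (by omega)
    rw [e1, e2, abs_le]
    constructor <;> linarith
  · rw [if_pos (by omega)] at e1
    rw [if_pos (by omega)] at e2
    rw [e1, e2, abs_le]
    constructor <;> linarith

lemma val_zero (l : List ℝ) (hs : l.Pairwise (· ≤ ·)) (m : ℕ) (hm : 1 ≤ m)
    (hlen : l.length = 2*m+1) (hnn : ∀ y ∈ l, 0 ≤ y) :
    |((List.orderedInsert (· ≤ ·) (0:ℝ) l).getD m 0 +
        (List.orderedInsert (· ≤ ·) (0:ℝ) l).getD (m+1) 0)/2 - l.getD m 0| =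
      (1/2) * (l.getD m 0 - l.getD (m-1) 0) := by
  obtain ⟨p, hp⟩ : ∃ p, p = (l.takeWhile (fun b => ¬ (0:ℝ) ≤ b)).length := ⟨_, rfl⟩
  have hp0 : p = 0 := by
    by_contra h
    have h1 : l.getD 0 0 < 0 := lt_of_lt_p 0 l 0 p hp (by omega)
    have : 0 ≤ l.getD 0 0 := hnn _ (by
      rw [List.getD_eq_getElem _ _ (by omega)]; exact List.getElem_mem _)
    linarith
  have e1 := getD_oi 0 l m p hp
  have e2 := getD_oi 0 l (m+1) p hp
  simp only [Nat.add_sub_cancel] at e2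
  rw [if_neg (by omega), if_neg (by omega)] at e1
  rw [if_neg (by omega), if_neg (by omega)] at e2
  have g2 : l.getD (m-1) 0 ≤ l.getD m 0 := sorted_getD_mono hs (by omega) (by omega)
  rw [e1, e2, abs_of_nonpos (by linarith)]
  ring

lemma val_B (l : List ℝ) (hs : l.Pairwise (· ≤ ·)) (m : ℕ) (hm : 1 ≤ m)
    (hlen : l.length = 2*m+1) (B : ℝ) (hub : ∀ y ∈ l, y ≤ B) :
    |((List.orderedInsert (· ≤ ·) B l).getD m 0 +
        (List.orderedInsert (· ≤ ·) B l).getD (m+1) 0)/2 - l.getD m 0| =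
      (1/2) * (l.getD (m+1) 0 - l.getD m 0) := by
  obtain ⟨p, hp⟩ : ∃ p, p = (l.takeWhile (fun b => ¬ B ≤ b)).length := ⟨_, rfl⟩
  have hple := p_le_length B l p hp
  have hubD : ∀ k, k < l.length → l.getD k 0 ≤ B := fun k hk => by
    rw [List.getD_eq_getElem _ _ hk]; exact hub _ (List.getElem_mem _)
  have e1 := getD_oi B l m p hp
  have e2 := getD_oi B l (m+1) p hp
  simp only [Nat.add_sub_cancel] at e2
  have g1 : l.getD m 0 ≤ l.getD (m+1) 0 := sorted_getD_mono hs (by omega) (by omega)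
  rcases le_or_gt p m with h | h
  · have hBp : B ≤ l.getD p 0 := le_of_ge_p B l hs p p hp (le_refl _) (by omega)
    have hlm : l.getD m 0 = B :=
      le_antisymm (hubD m (by omega)) (le_trans hBp (sorted_getD_mono hs h (by omega)))
    have hlm1 : l.getD (m+1) 0 = B :=
      le_antisymm (hubD (m+1) (by omega)) (le_trans hBp (sorted_getD_mono hs (by omega) (by omega)))
    have hsm : (List.orderedInsert (· ≤ ·) B l).getD m 0 = B := by
      rcases eq_or_lt_of_le h with heq | h'
      · rw [e1, if_neg (by omega), if_pos heq.symm]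
      · rw [e1, if_neg (by omega), if_neg (by omega)]
        exact le_antisymm (hubD (m-1) (by omega))
          (le_trans hBp (sorted_getD_mono hs (by omega) (by omega)))
    rw [if_neg (by omega), if_neg (by omega)] at e2
    rw [hsm, e2, hlm, hlm1]
    simp
  rcases eq_or_lt_of_le (show m+1 ≤ p by omega) with h2 | h2
  · -- p = m+1
    rw [if_pos (by omega)] at e1
    rw [if_neg (by omega), if_pos h2] at e2
    have hx2 : B ≤ l.getD (m+1) 0 := le_of_ge_p B l hs (m+1) p hp (by omega) (by omega)
    have hlm1 : l.getD (m+1) 0 = B := le_antisymm (hubD (m+1) (by omega)) hx2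
    rw [e1, e2, hlm1, abs_of_nonneg (by linarith [hubD m (show m < l.length by omega)])]
    ring
  · rw [if_pos (by omega)] at e1
    rw [if_pos (by omega)] at e2
    rw [e1, e2, abs_of_nonneg (by linarith)]
    ring

lemma sort_cons_eq (x : ℝ) (R : Multiset ℝ) :
    (x ::ₘ R).sort (· ≤ ·) = List.orderedInsert (· ≤ ·) x (R.sort (· ≤ ·)) := by
  apply List.Perm.eq_of_pairwise' (r := (· ≤ ·)) (Multiset.pairwise_sort _ _)
    (List.Pairwise.orderedInsert _ _ (Multiset.pairwise_sort _ _))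
  have h1 : ((x ::ₘ R).sort (· ≤ ·) : Multiset ℝ) = (x :: R.sort (· ≤ ·) : List ℝ) := by
    rw [Multiset.sort_eq]
    rw [← Multiset.cons_coe, Multiset.sort_eq]
  exact (Multiset.coe_eq_coe.mp h1).trans (List.perm_orderedInsert _ _ _).symm

lemma mmedian_odd (R : Multiset ℝ) (m : ℕ) (hc : R.card = 2*m+1) :
    mmedian R = (R.sort (· ≤ ·)).getD m 0 := by
  rw [mmedian, hc, if_pos (by omega)]
  congr 1
  omega

lemma mmedian_cons (R : Multiset ℝ) (x : ℝ) (m : ℕ) (hc : R.card = 2*m+1) :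
    mmedian (x ::ₘ R) = ((List.orderedInsert (· ≤ ·) x (R.sort (· ≤ ·))).getD m 0 +
      (List.orderedInsert (· ≤ ·) x (R.sort (· ≤ ·))).getD (m+1) 0) / 2 := by
  have hc2 : (x ::ₘ R).card = 2*m+2 := by rw [Multiset.card_cons, hc]
  rw [mmedian, hc2, if_neg (by omega), sort_cons_eq, show (2*m+2)/2 - 1 = m by omega,
    show (2*m+2)/2 = m+1 by omega]

theorem stmt1 (n : ℕ) (hn : 3 ≤ n) (hodd : Odd n) (B : ℝ) (hB : 0 < B)
    (R : Multiset ℝ) (hcard : R.card = n) (hmem : ∀ x ∈ R, x ∈ Set.Icc (0 : ℝ) B) :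
    IsGreatest ((fun x => |mmedian (x ::ₘ R) - mmedian R|) '' Set.Icc (0 : ℝ) B)
      ((1 / 2) *
        max ((R.sort (· ≤ ·)).getD ((n + 1) / 2) 0 - (R.sort (· ≤ ·)).getD ((n - 1) / 2) 0)
          ((R.sort (· ≤ ·)).getD ((n - 1) / 2) 0 -
            (R.sort (· ≤ ·)).getD ((n - 1) / 2 - 1) 0)) := by
  obtain ⟨m, hmn⟩ := hodd
  have hm : 1 ≤ m := by omega
  have hcard' : R.card = 2*m+1 := by omega
  set l := R.sort (· ≤ ·) with hl
  have hs : l.Pairwise (· ≤ ·) := Multiset.pairwise_sort _ _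
  have hlen : l.length = 2*m+1 := by rw [hl, Multiset.length_sort, hcard']
  have hnn : ∀ y ∈ l, 0 ≤ y := fun y hy => (hmem y (Multiset.mem_sort _ |>.mp hy)).1
  have hub : ∀ y ∈ l, y ≤ B := fun y hy => (hmem y (Multiset.mem_sort _ |>.mp hy)).2
  have hi1 : (n+1)/2 = m+1 := by omega
  have hi2 : (n-1)/2 = m := by omega
  rw [hi1, hi2]
  have hval : ∀ x : ℝ, |mmedian (x ::ₘ R) - mmedian R| =
      |((List.orderedInsert (· ≤ ·) x l).getD m 0 +
        (List.orderedInsert (· ≤ ·) x l).getD (m+1) 0)/2 - l.getD m 0| := by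
    intro x
    rw [mmedian_cons R x m hcard', mmedian_odd R m hcard']
  constructor
  · rcases le_total (l.getD m 0 - l.getD (m-1) 0) (l.getD (m+1) 0 - l.getD m 0) with h | h
    · exact ⟨B, ⟨le_of_lt hB, le_refl _⟩, by
        show |mmedian (B ::ₘ R) - mmedian R| = _
        rw [hval B, val_B l hs m hm hlen B hub, max_eq_left h]⟩
    · exact ⟨0, ⟨le_refl _, le_of_lt hB⟩, by
        show |mmedian ((0:ℝ) ::ₘ R) - mmedian R| = _
        rw [hval 0, val_zero l hs m hm hlen hnn, max_eq_right h]⟩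
  · rintro v ⟨x, hx, rfl⟩
    simp only
    rw [hval x]
    exact val_ub l hs m hm hlen x
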